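/- arXiv:2512.05390 — 2 statements merged into one kernel-verified Lean document; each statement's English description precedes it below -/
import Mathlib

section
/- Let 𝒜 ∈ ℝ^{m×m}, ℬ ∈ ℝ^m, 𝒞 ∈ ℝ^{1×m}, Φ ∈ ℝ^{d×d}, G ∈ ℝ^d with (Φ,G) controllable. Suppose (𝒜,ℬ) is stabilizable and for every λ ∈ σ(Φ) ∩ ℂ₊ the non-resonance condition rank[[𝒜 − λI, ℬ],[𝒞, 0]] = m + 1 holds. Then the cascade pair ([[Φ, G𝒞],[0, 𝒜]], [[0],[ℬ]]) is stabilizable, i.e., rank[[Φ − λI, G𝒞, 0],[0, 𝒜 − λI, ℬ]] = d + m for all λ in the closed right half-plane. -/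
open Matrix

/-- Complexification of a real matrix. -/
noncomputable def cmap {n m : ℕ} (A : Matrix (Fin n) (Fin m) ℝ) : Matrix (Fin n) (Fin m) ℂ :=
  A.map (algebraMap ℝ ℂ)

/-- Full row rank iff no nonzero left kernel vector. -/
lemma rank_eq_card_iff_vecMul {l n : Type*} [Fintype l] [Fintype n] [DecidableEq n]
    (M : Matrix l n ℂ) :
    M.rank = Fintype.card l ↔ ∀ v : l → ℂ, v ᵥ* M = 0 → v = 0 := by
  have h1 : Function.Injective M.vecMul ↔ ∀ v : l → ℂ, v ᵥ* M = 0 → v = 0 := by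
    rw [← Matrix.coe_vecMulLinear, ← LinearMap.ker_eq_bot, LinearMap.ker_eq_bot']
    simp [Matrix.vecMulLinear_apply]
  rw [← h1, Matrix.vecMul_injective_iff]
  constructor
  · intro h
    rw [linearIndependent_iff_card_eq_finrank_span (R := ℂ) (b := M.row),
      Set.finrank, ← Matrix.rank_eq_finrank_span_row]
    exact h.symm
  · intro h
    exact h.rank_matrix

/-- Stabilizability of the cascade of a controllable internal model `(Φ, G)`
driven by the output `𝒞` of a stabilizable plant `(𝒜, ℬ)` under the
non-resonance condition (Lemma 6). -/
theorem cascade_stabilizable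
    {d m : ℕ} (Φ : Matrix (Fin d) (Fin d) ℝ) (G : Matrix (Fin d) (Fin 1) ℝ)
    (A : Matrix (Fin m) (Fin m) ℝ) (B : Matrix (Fin m) (Fin 1) ℝ)
    (Cm : Matrix (Fin 1) (Fin m) ℝ)
    (hctrb : ∀ μ : ℂ, (Matrix.fromCols (cmap Φ - μ • 1) (cmap G)).rank = d)
    (hstab : ∀ μ : ℂ, 0 ≤ μ.re → (Matrix.fromCols (cmap A - μ • 1) (cmap B)).rank = m)
    (hnonres : ∀ μ ∈ spectrum ℂ (cmap Φ), 0 ≤ μ.re →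
      (Matrix.fromBlocks (cmap A - μ • 1) (cmap B) (cmap Cm) 0).rank = m + 1) :
    ∀ μ : ℂ, 0 ≤ μ.re →
      (Matrix.fromCols
        (Matrix.fromBlocks (cmap Φ - μ • 1) (cmap G * cmap Cm) 0 (cmap A - μ • 1))
        (Matrix.fromRows (0 : Matrix (Fin d) (Fin 1) ℂ) (cmap B))).rank = d + m := by
  intro μ hμ
  have hcard : Fintype.card (Fin d ⊕ Fin m) = d + m := by simp
  rw [← hcard, rank_eq_card_iff_vecMul]
  intro v hv
  set P := cmap Φ - μ • 1 with hP
  set Q := cmap A - μ • 1 with hQ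
  set u := v ∘ Sum.inl with hu
  set w := v ∘ Sum.inr with hw
  rw [vecMul_fromCols] at hv
  have h1 : v ᵥ* fromBlocks P (cmap G * cmap Cm) 0 Q = 0 :=
    funext fun i => congrFun hv (Sum.inl i)
  have h2 : v ᵥ* fromRows (0 : Matrix (Fin d) (Fin 1) ℂ) (cmap B) = 0 :=
    funext fun i => congrFun hv (Sum.inr i)
  rw [vecMul_fromBlocks] at h1
  have e1 : u ᵥ* P = 0 := by
    have := funext fun i => congrFun h1 (Sum.inl i)
    simp only [vecMul_zero, add_zero] at this
    exact this
  have e2 : u ᵥ* (cmap G * cmap Cm) + w ᵥ* Q = 0 := by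
    have := funext fun i => congrFun h1 (Sum.inr i)
    exact this
  have e3 : w ᵥ* cmap B = 0 := by
    rw [← Sum.elim_comp_inl_inr v, sumElim_vecMul_fromRows] at h2
    simpa using h2
  have key : u = 0 ∧ w = 0 := by
    by_cases hspec : μ ∈ spectrum ℂ (cmap Φ)
    · -- non-resonance case
      have hr := (rank_eq_card_iff_vecMul
          (fromBlocks Q (cmap B) (cmap Cm) (0 : Matrix (Fin 1) (Fin 1) ℂ))).mp
        (by simp only [Fintype.card_sum, Fintype.card_fin]; exact hnonres μ hspec hμ)
      have hz : Sum.elim w (u ᵥ* cmap G) ᵥ*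
          fromBlocks Q (cmap B) (cmap Cm) 0 = 0 := by
        rw [vecMul_fromBlocks]
        have hA : w ᵥ* Q + (u ᵥ* cmap G) ᵥ* cmap Cm = 0 := by
          rw [vecMul_vecMul, add_comm]; exact e2
        simp only [Sum.elim_comp_inl, Sum.elim_comp_inr, vecMul_zero, add_zero, hA, e3]
        ext (i | i) <;> rfl
      have hzz := hr _ hz
      have hw0 : w = 0 := funext fun i => congrFun hzz (Sum.inl i)
      have hg0 : u ᵥ* cmap G = 0 := funext fun i => congrFun hzz (Sum.inr i)
      have hrc := (rank_eq_card_iff_vecMul (fromCols P (cmap G))).mp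
        (by simp only [Fintype.card_fin]; exact hctrb μ)
      have hu0 : u = 0 := by
        apply hrc
        rw [vecMul_fromCols, e1, hg0]
        ext (i | i) <;> simp
      exact ⟨hu0, hw0⟩
    · -- Φ - μ invertible
      have hunit : IsUnit P := by
        have := spectrum.notMem_iff.mp hspec
        have halg : (algebraMap ℂ (Matrix (Fin d) (Fin d) ℂ)) μ = μ • 1 := by
          simp [Algebra.algebraMap_eq_smul_one]
        rw [halg] at this
        simpa [hP, neg_sub] using this.neg
      have hu0 : u = 0 := by
        have hdet : IsUnit P.det := (Matrix.isUnit_iff_isUnit_det P).mp hunit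
        calc u = u ᵥ* (P * P⁻¹) := by rw [Matrix.mul_nonsing_inv P hdet, vecMul_one]
        _ = (u ᵥ* P) ᵥ* P⁻¹ := (vecMul_vecMul u P P⁻¹).symm
        _ = 0 := by rw [e1, zero_vecMul]
      have hrs := (rank_eq_card_iff_vecMul (fromCols Q (cmap B))).mp
        (by simp only [Fintype.card_fin]; exact hstab μ hμ)
      have hw0 : w = 0 := by
        apply hrs
        rw [vecMul_fromCols]
        have : w ᵥ* Q = 0 := by
          rw [hu0, zero_vecMul, zero_add] at e2; exact e2
        rw [this, e3]
        ext (i | i) <;> simp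
      exact ⟨hu0, hw0⟩
  rw [← Sum.elim_comp_inl_inr v, ← hu, ← hw, key.1, key.2]
  ext (i | i) <;> simp
end

section
/- Let A ∈ ℝ^{n×n}, B ∈ ℝ^n, C ∈ ℝ^{1×n}, and let Π₁, Π₂ ∈ ℝ^{n×n} satisfy Π₁F = (A − Π₁LC)Π₁, Π₂F = (A − Π₁LC)Π₂, Π₂L = B, with H₁ = CΠ₁, H₂ = CΠ₂. Consider the filters ζ̇_y = Fζ_y + Ly, ζ̇_u = Fζ_u + Lu with y = Cx, ẋ = Ax + Bu. Then the signal ρ(t) := x(t) − Π₁ζ_y(t) − Π₂ζ_u(t) satisfies ρ̇ = (A − Π₁LC)ρ; in particular, if x(0) = Π₁ζ_y(0) + Π₂ζ_u(0) then x(t) = Π₁ζ_y(t) + Π₂ζ_u(t) for all t ≥ 0. -/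
open Matrix

lemma vecMulVec_mulVec_eq {n : ℕ} (L Cv x : Fin n → ℝ) :
    (Matrix.vecMulVec L Cv).mulVec x = (Cv ⬝ᵥ x) • L := by
  ext i
  simp [mulVec, vecMulVec, dotProduct, Finset.mul_sum, mul_assoc, mul_comm, mul_left_comm]

/-- The transverse coordinate `ρ = x − Π₁ζ_y − Π₂ζ_u` of the filter-based
non-minimal realization evolves autonomously as `ρ̇ = (A − Π₁LC)ρ`; in
particular the subspace `{x = Π₁ζ_y + Π₂ζ_u}` is invariant. -/
theorem transverse_coordinate_dynamics
    {n : ℕ} (A F Pi1 Pi2 : Matrix (Fin n) (Fin n) ℝ)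
    (B L Cv : Fin n → ℝ)
    (hPi1 : Pi1 * F = (A - Pi1 * Matrix.vecMulVec L Cv) * Pi1)
    (hPi2 : Pi2 * F = (A - Pi1 * Matrix.vecMulVec L Cv) * Pi2)
    (hPi2L : Pi2.mulVec L = B)
    (x ζy ζu : ℝ → Fin n → ℝ) (u : ℝ → ℝ)
    (hx : ∀ t, HasDerivAt x (A.mulVec (x t) + u t • B) t)
    (hζy : ∀ t, HasDerivAt ζy (F.mulVec (ζy t) + (Cv ⬝ᵥ x t) • L) t)
    (hζu : ∀ t, HasDerivAt ζu (F.mulVec (ζu t) + u t • L) t) :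
    (∀ t, HasDerivAt (fun s => x s - Pi1.mulVec (ζy s) - Pi2.mulVec (ζu s))
      ((A - Pi1 * Matrix.vecMulVec L Cv).mulVec
        (x t - Pi1.mulVec (ζy t) - Pi2.mulVec (ζu t))) t) ∧
    (x 0 = Pi1.mulVec (ζy 0) + Pi2.mulVec (ζu 0) →
      ∀ t ≥ (0 : ℝ), x t = Pi1.mulVec (ζy t) + Pi2.mulVec (ζu t)) := by
  set M : Matrix (Fin n) (Fin n) ℝ := A - Pi1 * Matrix.vecMulVec L Cv with hM
  -- continuous linear maps given by the matrices
  let T1 : (Fin n → ℝ) →L[ℝ] (Fin n → ℝ) := LinearMap.toContinuousLinearMap Pi1.mulVecLin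
  let T2 : (Fin n → ℝ) →L[ℝ] (Fin n → ℝ) := LinearMap.toContinuousLinearMap Pi2.mulVecLin
  let TM : (Fin n → ℝ) →L[ℝ] (Fin n → ℝ) := LinearMap.toContinuousLinearMap M.mulVecLin
  have hT1 : ∀ v, T1 v = Pi1.mulVec v := fun v => rfl
  have hT2 : ∀ v, T2 v = Pi2.mulVec v := fun v => rfl
  have hTM : ∀ v, TM v = M.mulVec v := fun v => rfl
  have key : ∀ t, HasDerivAt (fun s => x s - Pi1.mulVec (ζy s) - Pi2.mulVec (ζu s))
      (M.mulVec (x t - Pi1.mulVec (ζy t) - Pi2.mulVec (ζu t))) t := by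
    intro t
    have h1 : HasDerivAt (fun s => Pi1.mulVec (ζy s))
        (Pi1.mulVec (F.mulVec (ζy t) + (Cv ⬝ᵥ x t) • L)) t :=
      T1.hasFDerivAt.comp_hasDerivAt t (hζy t)
    have h2 : HasDerivAt (fun s => Pi2.mulVec (ζu s))
        (Pi2.mulVec (F.mulVec (ζu t) + u t • L)) t :=
      T2.hasFDerivAt.comp_hasDerivAt t (hζu t)
    have h := ((hx t).sub h1).sub h2
    refine h.congr_deriv ?_
    have e1 : M.mulVec (Pi1.mulVec (ζy t)) = Pi1.mulVec (F.mulVec (ζy t)) := by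
      rw [Matrix.mulVec_mulVec, Matrix.mulVec_mulVec, hPi1]
    have e2 : M.mulVec (Pi2.mulVec (ζu t)) = Pi2.mulVec (F.mulVec (ζu t)) := by
      rw [Matrix.mulVec_mulVec, Matrix.mulVec_mulVec, hPi2]
    have e3 : M.mulVec (x t) = A.mulVec (x t) - (Cv ⬝ᵥ x t) • Pi1.mulVec L := by
      rw [hM, Matrix.sub_mulVec, ← Matrix.mulVec_mulVec, vecMulVec_mulVec_eq,
        Matrix.mulVec_smul]
    rw [Matrix.mulVec_sub, Matrix.mulVec_sub, e1, e2, e3,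
      Matrix.mulVec_add, Matrix.mulVec_add, Matrix.mulVec_smul, Matrix.mulVec_smul, hPi2L]
    abel
  refine ⟨key, ?_⟩
  intro h0 t ht
  set ρ : ℝ → Fin n → ℝ := fun s => x s - Pi1.mulVec (ζy s) - Pi2.mulVec (ζu s) with hρ
  have hρ0 : ρ 0 = 0 := by
    simp [hρ, h0, sub_sub]
  have hzero : ρ t = 0 := by
    have huniq := ODE_solution_unique (v := fun _ z => M.mulVec z) (K := ‖TM‖₊)
      (f := ρ) (g := fun _ => 0) (a := 0) (b := t)
      (fun _ => by exact TM.lipschitz)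
      (fun s _ => ((key s).continuousAt).continuousWithinAt)
      (fun s _ => ((key s).hasDerivWithinAt))
      (continuousOn_const)
      (fun s _ => by simpa using (hasDerivAt_const s (0 : Fin n → ℝ)).hasDerivWithinAt)
      (by simpa using hρ0)
    exact huniq ⟨ht, le_refl t⟩
  exact sub_eq_zero.mp (by simpa [hρ, sub_sub] using hzero)
end
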